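/- Let u and v be CNPs of dimension n with no null positions, and let w = u − v with w_0 = w_{n+1} = 0. Then there exists a sequence of events transforming u into v of total cost at most |F_w| − 2 under the cost function any (where every event costs 1), obtained by treating each non-extreme maximal flat interval with a single event. Consequently dist_any(u,v) ≤ |F_w| − 2 whenever u ≠ v. -/

import Mathlib

open scoped ENat

/-- A copy-number profile of dimension `n`: positions are `Fin n` (position `i+1` in 1-based terms),
values are non-negative integers. -/
abbrev CNP (n : ℕ) := Fin n → ℕ

/-- An event `(s, t, δ)`: affects 1-based positions in `[s, t]`, changing copy numbers by `δ`. -/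
abbrev Event := ℕ × ℕ × ℤ

/-- A valid event has `1 ≤ s ≤ t ≤ n` and `δ ≠ 0`. -/
def ValidEvent (n : ℕ) (e : Event) : Prop :=
  1 ≤ e.1 ∧ e.1 ≤ e.2.1 ∧ e.2.1 ≤ n ∧ e.2.2 ≠ 0

/-- Applying event `e = (s,t,δ)` to `u` : each 1-based position `i ∈ [s,t]` with `u_i > 0`
becomes `max(u_i + δ, 0)`; other positions are unchanged. -/
def applyEvent {n : ℕ} (u : CNP n) (e : Event) : CNP n :=
  fun i => if e.1 ≤ (i : ℕ) + 1 ∧ (i : ℕ) + 1 ≤ e.2.1 ∧ 0 < u i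
    then ((u i : ℤ) + e.2.2).toNat else u i

/-- Applying a sequence of events in order. -/
def applySeq {n : ℕ} (u : CNP n) (E : List Event) : CNP n :=
  E.foldl applyEvent u

/-- Cost of applying event `e` on `u` w.r.t. cost function `f`:
the maximum of `f (u_i) δ` over affected positions `i ∈ [s,t]`. -/
noncomputable def eventCost {n : ℕ} (f : ℕ → ℤ → ℕ∞) (u : CNP n) (e : Event) : ℕ∞ :=
  (Finset.univ.filter (fun i : Fin n => e.1 ≤ (i : ℕ) + 1 ∧ (i : ℕ) + 1 ≤ e.2.1)).sup
    (fun i => f (u i) e.2.2)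

/-- Total cost of applying a sequence of events, costs evaluated on successive profiles. -/
noncomputable def seqCost {n : ℕ} (f : ℕ → ℤ → ℕ∞) : CNP n → List Event → ℕ∞
  | _, [] => 0
  | u, e :: E => eventCost f u e + seqCost f (applyEvent u e) E

/-- `dist_f(u,v)`: minimum total cost of a sequence of valid events transforming `u` into `v`
(`⊤` if no such sequence exists). -/
noncomputable def distf {n : ℕ} (f : ℕ → ℤ → ℕ∞) (u v : CNP n) : ℕ∞ :=
  sInf { c | ∃ E : List Event, (∀ e ∈ E, ValidEvent n e) ∧ applySeq u E = v ∧ seqCost f u E = c }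

/-- A unit-cost function takes only values `1` and `∞`. -/
def UnitCost (f : ℕ → ℤ → ℕ∞) : Prop := ∀ c δ, f c δ = 1 ∨ f c δ = ⊤

/-- The most permissive cost function: every event costs `1`. -/
def anyCost : ℕ → ℤ → ℕ∞ := fun _ _ => 1

/-- `dist_any(u,v)`: minimum number of events transforming `u` into `v`. -/
noncomputable def distAny {n : ℕ} (u v : CNP n) : ℕ∞ := distf anyCost u v

/-- The difference vector `w = u - v` in 1-based indexing, extended by `w_0 = w_{n+1} = 0`. -/
def diffExt {n : ℕ} (u v : CNP n) (i : ℕ) : ℤ :=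
  if h : 1 ≤ i ∧ i ≤ n then (u ⟨i - 1, by omega⟩ : ℤ) - (v ⟨i - 1, by omega⟩ : ℤ) else 0

/-- `[a,b] ⊆ [0, n+1]` is a flat interval of `w` if `w` is constant on it. -/
def IsFlat (n : ℕ) (w : ℕ → ℤ) (a b : ℕ) : Prop :=
  a ≤ b ∧ b ≤ n + 1 ∧ ∀ i j, a ≤ i → i ≤ b → a ≤ j → j ≤ b → w i = w j

/-- A maximal flat interval: flat, and not properly contained in a flat interval. -/
def IsMaxFlat (n : ℕ) (w : ℕ → ℤ) (a b : ℕ) : Prop :=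
  IsFlat n w a b ∧ ∀ a' b', a' ≤ a → b ≤ b' → IsFlat n w a' b' → a' = a ∧ b' = b

/-- `|F_w|`: the number of maximal flat intervals of `w` over `[0, n+1]`. -/
noncomputable def numFlat (n : ℕ) (w : ℕ → ℤ) : ℕ :=
  Nat.card {p : ℕ × ℕ // IsMaxFlat n w p.1 p.2}

namespace S6

variable (n : ℕ) (w : ℕ → ℤ)

def P (a c : ℕ) : Prop := a ≤ c ∧ (c = n + 1 ∨ w (c + 1) ≠ w c)

noncomputable def endOf (a : ℕ) : ℕ := sInf {c | P n w a c}

lemma P_top {a : ℕ} (ha : a ≤ n + 1) : P n w a (n + 1) := ⟨ha, Or.inl rfl⟩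

lemma endOf_mem {a : ℕ} (ha : a ≤ n + 1) : P n w a (endOf n w a) :=
  Nat.sInf_mem (s := {c | P n w a c}) ⟨_, P_top n w ha⟩

lemma endOf_le {a c : ℕ} (h : P n w a c) : endOf n w a ≤ c := Nat.sInf_le h

lemma le_endOf {a : ℕ} (ha : a ≤ n + 1) : a ≤ endOf n w a := (endOf_mem n w ha).1

lemma endOf_le_top {a : ℕ} (ha : a ≤ n + 1) : endOf n w a ≤ n + 1 :=
  endOf_le n w (P_top n w ha)

lemma step_below {a c : ℕ} (h : a ≤ c) (h2 : c < endOf n w a) : w (c + 1) = w c := by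
  have := Nat.notMem_of_lt_sInf h2
  simp only [Set.mem_setOf_eq, P, not_and, not_or, not_ne_iff] at this
  exact (this h).2

lemma const_of_steps {a b : ℕ} (h : ∀ c, a ≤ c → c < b → w (c + 1) = w c) :
    ∀ i, a ≤ i → i ≤ b → w i = w a := by
  intro i hi hib
  induction i, hi using Nat.le_induction with
  | base => rfl
  | succ i hi ih => rw [h i hi (by omega)]; exact ih (by omega)

lemma const_upto {a : ℕ} (ha : a ≤ n + 1) :
    ∀ i, a ≤ i → i ≤ endOf n w a → w i = w a :=
  const_of_steps w (fun c hc hc2 => step_below n w hc hc2)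

lemma flat_endOf {a : ℕ} (ha : a ≤ n + 1) : IsFlat n w a (endOf n w a) :=
  ⟨le_endOf n w ha, endOf_le_top n w ha, fun i j hi hib hj hjb => by
    rw [const_upto n w ha i hi hib, const_upto n w ha j hj hjb]⟩

lemma isMaxFlat_iff {a b : ℕ} :
    IsMaxFlat n w a b ↔ a ≤ n + 1 ∧ (a = 0 ∨ w a ≠ w (a - 1)) ∧ b = endOf n w a := by
  constructor
  · rintro ⟨⟨hab, hb, hconst⟩, hmax⟩
    have ha : a ≤ n + 1 := le_trans hab hb
    have hbd : a = 0 ∨ w a ≠ w (a - 1) := by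
      by_contra hc
      push_neg at hc
      obtain ⟨ha0, heq⟩ := hc
      have hflat : IsFlat n w (a - 1) b := by
        refine ⟨by omega, hb, fun i j hi hib hj hjb => ?_⟩
        have key : ∀ k, a - 1 ≤ k → k ≤ b → w k = w a := by
          intro k hk hkb
          rcases Nat.lt_or_ge k a with hk2 | hk2
          · have : k = a - 1 := by omega
            rw [this]; exact heq.symm
          · exact hconst k a hk2 hkb le_rfl hab
        rw [key i hi hib, key j hj hjb]
      have := (hmax (a - 1) b (by omega) le_rfl hflat).1
      omega
    have hPb : P n w a b := by
      refine ⟨hab, ?_⟩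
      by_contra hc
      push_neg at hc
      obtain ⟨hbn, heq⟩ := hc
      have hb1 : b + 1 ≤ n + 1 := by omega
      have hflat : IsFlat n w a (b + 1) := by
        refine ⟨by omega, hb1, fun i j hi hib hj hjb => ?_⟩
        have key : ∀ k, a ≤ k → k ≤ b + 1 → w k = w a := by
          intro k hk hkb
          rcases Nat.lt_or_ge k (b + 1) with hk2 | hk2
          · exact hconst k a hk (by omega) le_rfl hab
          · have : k = b + 1 := by omega
            rw [this, heq]; exact hconst b a hab le_rfl le_rfl hab
        rw [key i hi hib, key j hj hjb]
      have := (hmax a (b + 1) le_rfl (by omega) hflat).2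
      omega
    refine ⟨ha, hbd, le_antisymm ?_ (endOf_le n w hPb)⟩
    by_contra hc
    push_neg at hc
    obtain ⟨hae, hor⟩ := endOf_mem n w ha
    have hne : endOf n w a ≠ n + 1 := by omega
    have : w (endOf n w a + 1) = w (endOf n w a) :=
      hconst (endOf n w a + 1) (endOf n w a) (by omega) (by omega) (by omega) (by omega)
    tauto
  · rintro ⟨ha, hbd, rfl⟩
    refine ⟨flat_endOf n w ha, fun a' b' ha' hb' hflat' => ?_⟩
    have hae := le_endOf n w ha
    have hbe := endOf_le_top n w ha
    constructor
    · by_contra hc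
      have ha1 : 1 ≤ a := by omega
      have hw : w a ≠ w (a - 1) := by rcases hbd with h | h; omega; exact h
      exact hw (hflat'.2.2 a (a - 1) (by omega) (by omega) (by omega) (by omega))
    · by_contra hc
      have hlt : endOf n w a < b' := by omega
      obtain ⟨hae2, hor⟩ := endOf_mem n w ha
      have hne : endOf n w a ≠ n + 1 := by
        have := hflat'.2.1; omega
      have : w (endOf n w a + 1) = w (endOf n w a) :=
        hflat'.2.2 _ _ (by omega) (by omega) (by omega) (by omega)
      tauto

def starts : Finset ℕ :=
  (Finset.range (n + 2)).filter (fun a => a = 0 ∨ w a ≠ w (a - 1))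

lemma mem_starts {a : ℕ} :
    a ∈ starts n w ↔ a ≤ n + 1 ∧ (a = 0 ∨ w a ≠ w (a - 1)) := by
  simp only [starts, Finset.mem_filter, Finset.mem_range]
  constructor
  · rintro ⟨h1, h2⟩; exact ⟨by omega, h2⟩
  · rintro ⟨h1, h2⟩; exact ⟨by omega, h2⟩

noncomputable def flatEquiv :
    {p : ℕ × ℕ // IsMaxFlat n w p.1 p.2} ≃ {a : ℕ // a ∈ starts n w} where
  toFun p := ⟨p.1.1, by
    have := (isMaxFlat_iff n w).mp p.2
    exact (mem_starts n w).mpr ⟨this.1, this.2.1⟩⟩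
  invFun a := ⟨(a.1, endOf n w a.1), by
    have := (mem_starts n w).mp a.2
    exact (isMaxFlat_iff n w).mpr ⟨this.1, this.2, rfl⟩⟩
  left_inv p := by
    obtain ⟨⟨a, b⟩, hp⟩ := p
    have := (isMaxFlat_iff n w).mp hp
    exact Subtype.ext (Prod.ext rfl this.2.2.symm)
  right_inv a := rfl

lemma numFlat_eq_card :
    Nat.card {p : ℕ × ℕ // IsMaxFlat n w p.1 p.2} = (starts n w).card := by
  rw [Nat.card_eq_of_bijective _ (flatEquiv n w).bijective, Nat.card_eq_finsetCard]


lemma starts_lt_of_lt {a b : ℕ} (ha : a ∈ starts n w) (hb : b ∈ starts n w)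
    (hab : a < b) : endOf n w a < b := by
  have hb' := (mem_starts n w).mp hb
  have hb1 : 1 ≤ b := by omega
  have hwb : w b ≠ w (b - 1) := by rcases hb'.2 with h | h; omega; exact h
  have hP : P n w a (b - 1) := by
    refine ⟨by omega, Or.inr ?_⟩
    have : b - 1 + 1 = b := by omega
    rw [this]; exact hwb
  have := endOf_le n w hP
  omega

/-- the largest start `≤ j` controls `w j`. -/
lemma max_start {j : ℕ} (hj : j ≤ n + 1) :
    ∃ a ∈ starts n w, a ≤ j ∧ w j = w a ∧ j ≤ endOf n w a ∧
      ∀ b ∈ starts n w, b ≤ j → b ≤ a := by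
  classical
  have h0s : 0 ∈ (starts n w).filter (· ≤ j) := by
    simp only [Finset.mem_filter]
    exact ⟨(mem_starts n w).mpr ⟨by omega, Or.inl rfl⟩, by omega⟩
  have hne : ((starts n w).filter (· ≤ j)).Nonempty := ⟨0, h0s⟩
  obtain ⟨haS, haj'⟩ := Finset.mem_filter.mp (Finset.max'_mem _ hne)
  set a := ((starts n w).filter (· ≤ j)).max' hne with hadef
  have haj' : a ≤ j := haj'
  have han : a ≤ n + 1 := ((mem_starts n w).mp haS).1
  have key : ∀ c, a ≤ c → c < j → w (c + 1) = w c := by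
    intro c hc hcj
    by_contra hne'
    have hc1 : c + 1 ∈ starts n w := by
      refine (mem_starts n w).mpr ⟨by omega, Or.inr ?_⟩
      simpa using hne'
    have : c + 1 ≤ a := Finset.le_max' _ _ (Finset.mem_filter.mpr ⟨hc1, by omega⟩)
    omega
  have hwja : w j = w a := const_of_steps w key j haj' le_rfl
  have hjend : j ≤ endOf n w a := by
    by_contra hc
    push_neg at hc
    obtain ⟨hae, hor⟩ := endOf_mem n w han
    have : endOf n w a ≠ n + 1 := by omega
    have h2 : w (endOf n w a + 1) ≠ w (endOf n w a) := by tauto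
    exact h2 (key _ hae (by omega))
  refine ⟨a, haS, haj', hwja, hjend, fun b hb hbj => Finset.le_max' _ _ ?_⟩
  exact Finset.mem_filter.mpr ⟨hb, by simpa using hbj⟩

/-- event range membership -/
def InR (e : Event) (j : ℕ) : Prop := e.1 ≤ j ∧ j ≤ e.2.1

lemma applySeq_spec {n : ℕ} (u v : CNP n) (E : List Event)
    (hgood : ∀ e ∈ E, ∀ i : Fin n, InR e ((i : ℕ) + 1) →
      0 < u i ∧ ((u i : ℤ) + e.2.2).toNat = v i)
    (hdisj : E.Pairwise (fun e f => ∀ j, InR e j → ¬ InR f j)) :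
    ∀ i : Fin n,
      ((∃ e ∈ E, InR e ((i : ℕ) + 1)) → applySeq u E i = v i) ∧
      ((¬ ∃ e ∈ E, InR e ((i : ℕ) + 1)) → applySeq u E i = u i) := by
  induction E generalizing u with
  | nil => intro i; simp [applySeq]
  | cons e E ih =>
    rw [List.pairwise_cons] at hdisj
    obtain ⟨hd, hdtail⟩ := hdisj
    set u' := applyEvent u e with hu'def
    have hstep : applySeq u (e :: E) = applySeq u' E := rfl
    have hu'not : ∀ i : Fin n, ¬ InR e ((i : ℕ) + 1) → u' i = u i := by
      intro i hi
      rw [hu'def]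
      unfold applyEvent
      rw [if_neg]
      intro hcond
      exact hi ⟨hcond.1, hcond.2.1⟩
    have hu'yes : ∀ i : Fin n, InR e ((i : ℕ) + 1) → u' i = v i := by
      intro i hi
      obtain ⟨hpos, htonat⟩ := hgood e (by simp) i hi
      rw [hu'def]
      unfold applyEvent
      rw [if_pos ⟨hi.1, hi.2, hpos⟩]
      exact htonat
    have hgood' : ∀ f ∈ E, ∀ i : Fin n, InR f ((i : ℕ) + 1) →
        0 < u' i ∧ ((u' i : ℤ) + f.2.2).toNat = v i := by
      intro f hf i hi
      have hnote : ¬ InR e ((i : ℕ) + 1) := fun he => hd f hf _ he hi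
      rw [hu'not i hnote]
      exact hgood f (by simp [hf]) i hi
    have IH := ih u' hgood' hdtail
    intro i
    constructor
    · rintro ⟨f, hf, hfi⟩
      rw [hstep]
      rcases List.mem_cons.mp hf with rfl | hfE
      · have hnotE : ¬ ∃ g ∈ E, InR g ((i : ℕ) + 1) := by
          rintro ⟨g, hg, hgi⟩
          exact hd g hg _ hfi hgi
        rw [(IH i).2 hnotE]
        exact hu'yes i hfi
      · exact (IH i).1 ⟨f, hfE, hfi⟩
    · intro hnone
      rw [hstep]
      have hnotE : ¬ ∃ g ∈ E, InR g ((i : ℕ) + 1) := by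
        rintro ⟨g, hg, hgi⟩
        exact hnone ⟨g, by simp [hg], hgi⟩
      have hnote : ¬ InR e ((i : ℕ) + 1) := fun he => hnone ⟨e, by simp, he⟩
      rw [(IH i).2 hnotE]
      exact hu'not i hnote

lemma eventCost_any {n : ℕ} (u : CNP n) {e : Event} (he : ValidEvent n e) :
    eventCost anyCost u e = 1 := by
  obtain ⟨h1, h2, h3, _⟩ := he
  have hmem : (⟨e.1 - 1, by omega⟩ : Fin n) ∈
      (Finset.univ.filter (fun i : Fin n => e.1 ≤ (i : ℕ) + 1 ∧ (i : ℕ) + 1 ≤ e.2.1)) := by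
    simp only [Finset.mem_filter, Finset.mem_univ, true_and]
    omega
  exact Finset.sup_const ⟨_, hmem⟩ 1

lemma seqCost_any_length {n : ℕ} (u : CNP n) (E : List Event)
    (h : ∀ e ∈ E, ValidEvent n e) : seqCost anyCost u E = E.length := by
  induction E generalizing u with
  | nil => rfl
  | cons e E ih =>
    rw [show seqCost anyCost u (e :: E) =
      eventCost anyCost u e + seqCost anyCost (applyEvent u e) E from rfl,
      eventCost_any u (h e (by simp)), ih _ (fun f hf => h f (by simp [hf]))]
    rw [List.length_cons]
    push_cast
    ring


end S6

/-- for CNPs with no null positions and `u ≠ v`, there is a sequence of events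
transforming `u` into `v` of total cost at most `|F_w| - 2` under the `any` cost function
(one event per non-extreme maximal flat interval of `w = u - v`); hence
`dist_any(u,v) ≤ |F_w| - 2`. -/
theorem stmt6 {n : ℕ} (u v : CNP n) (huv : u ≠ v)
    (hu : ∀ i, 0 < u i) (hv : ∀ i, 0 < v i) :
    (∃ E : List Event, (∀ e ∈ E, ValidEvent n e) ∧ applySeq u E = v ∧
      seqCost anyCost u E ≤ ((numFlat n (diffExt u v) - 2 : ℕ) : ℕ∞)) ∧
    distAny u v ≤ ((numFlat n (diffExt u v) - 2 : ℕ) : ℕ∞) := by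
  classical
  set w := diffExt u v with hwdef
  have hw0 : w 0 = 0 := by
    rw [hwdef]; unfold diffExt; rw [dif_neg (by omega)]
  have hwn1 : w (n + 1) = 0 := by
    rw [hwdef]; unfold diffExt; rw [dif_neg (by omega)]
  have hwi : ∀ i : Fin n, w ((i : ℕ) + 1) = (u i : ℤ) - v i := by
    intro i
    rw [hwdef]; unfold diffExt
    rw [dif_pos ⟨by omega, by omega⟩]
    have : (⟨(i : ℕ) + 1 - 1, by omega⟩ : Fin n) = i := by
      apply Fin.ext; simp
    rw [this]
  set T := (S6.starts n w).filter (fun a => w a ≠ 0) with hT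
  have hTprop : ∀ a ∈ T, a ∈ S6.starts n w ∧ w a ≠ 0 := fun a ha => Finset.mem_filter.mp ha
  have hTfacts : ∀ a ∈ T, 1 ≤ a ∧ a ≤ S6.endOf n w a ∧ S6.endOf n w a ≤ n := by
    intro a ha
    obtain ⟨haS, haw⟩ := hTprop a ha
    have han : a ≤ n + 1 := ((S6.mem_starts n w).mp haS).1
    have h1 : 1 ≤ a := by
      rcases Nat.eq_zero_or_pos a with rfl | h
      · exact absurd hw0 haw
      · exact h
    have h2 := S6.le_endOf n w han
    refine ⟨h1, h2, ?_⟩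
    have htop := S6.endOf_le_top n w han
    have hconst := S6.const_upto n w han (S6.endOf n w a) h2 le_rfl
    by_contra hc
    have heq : S6.endOf n w a = n + 1 := by omega
    rw [heq, hwn1] at hconst
    exact haw hconst.symm
  set E := T.toList.map (fun a => ((a, S6.endOf n w a, -(w a)) : Event)) with hE
  have hvalid : ∀ e ∈ E, ValidEvent n e := by
    intro e he
    rw [hE, List.mem_map] at he
    obtain ⟨a, haT, rfl⟩ := he
    obtain ⟨h1, h2, h3⟩ := hTfacts a (Finset.mem_toList.mp haT)
    exact ⟨h1, h2, h3, neg_ne_zero.mpr (hTprop a (Finset.mem_toList.mp haT)).2⟩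
  have hgood : ∀ e ∈ E, ∀ i : Fin n, S6.InR e ((i : ℕ) + 1) →
      0 < u i ∧ ((u i : ℤ) + e.2.2).toNat = v i := by
    intro e he i hi
    rw [hE, List.mem_map] at he
    obtain ⟨a, haT, rfl⟩ := he
    refine ⟨hu i, ?_⟩
    obtain ⟨haS, haw⟩ := hTprop a (Finset.mem_toList.mp haT)
    have han : a ≤ n + 1 := ((S6.mem_starts n w).mp haS).1
    have hconst : w ((i : ℕ) + 1) = w a := S6.const_upto n w han _ hi.1 hi.2
    have hkey : (u i : ℤ) + -(w a) = (v i : ℤ) := by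
      rw [← hconst, hwi i]; ring
    show ((u i : ℤ) + -(w a)).toNat = v i
    rw [hkey, Int.toNat_natCast]
  have hdisj : E.Pairwise (fun e f => ∀ j, S6.InR e j → ¬ S6.InR f j) := by
    rw [hE, List.pairwise_map]
    refine (Finset.nodup_toList T).pairwise_of_forall_ne ?_
    intro a ha b hb hab j hja hjb
    have haS := (hTprop a (Finset.mem_toList.mp ha)).1
    have hbS := (hTprop b (Finset.mem_toList.mp hb)).1
    obtain ⟨hja1, hja2⟩ := hja
    obtain ⟨hjb1, hjb2⟩ := hjb
    rcases Nat.lt_or_ge a b with h | h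
    · have := S6.starts_lt_of_lt n w haS hbS h
      simp only at hja2 hjb1
      omega
    · have hba : b < a := by omega
      have := S6.starts_lt_of_lt n w hbS haS hba
      simp only at hja1 hjb2
      omega
  have hspec := S6.applySeq_spec u v E hgood hdisj
  have happly : applySeq u E = v := by
    funext i
    by_cases hcov : ∃ e ∈ E, S6.InR e ((i : ℕ) + 1)
    · exact (hspec i).1 hcov
    · rw [(hspec i).2 hcov]
      by_contra hne
      have hwne : w ((i : ℕ) + 1) ≠ 0 := by
        rw [hwi i]
        intro h
        exact hne (by exact_mod_cast sub_eq_zero.mp h)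
      obtain ⟨a, haS, haj, hwja, hjend, -⟩ :=
        S6.max_start n w (show (i : ℕ) + 1 ≤ n + 1 by omega)
      have haT : a ∈ T := Finset.mem_filter.mpr ⟨haS, by rw [← hwja]; exact hwne⟩
      exact hcov ⟨(a, S6.endOf n w a, -(w a)),
        List.mem_map.mpr ⟨a, Finset.mem_toList.mpr haT, rfl⟩, ⟨haj, hjend⟩⟩
  have hnum : numFlat n w = (S6.starts n w).card := S6.numFlat_eq_card n w
  have hTsub : T ⊆ S6.starts n w := Finset.filter_subset _ _
  obtain ⟨astar, hsS, -, hwa, -, hmax⟩ := S6.max_start n w (le_refl (n + 1))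
  have hwa0 : w astar = 0 := by rw [← hwa]; exact hwn1
  obtain ⟨i0, hi0⟩ := Function.ne_iff.mp huv
  have hw0i : w ((i0 : ℕ) + 1) ≠ 0 := by
    rw [hwi i0]
    intro h
    exact hi0 (by exact_mod_cast sub_eq_zero.mp h)
  obtain ⟨a0, ha0S, -, hwa0', -, -⟩ :=
    S6.max_start n w (show (i0 : ℕ) + 1 ≤ n + 1 by omega)
  have hastar0 : astar ≠ 0 := by
    intro h
    have ha0n : a0 ≤ n + 1 := ((S6.mem_starts n w).mp ha0S).1
    have := hmax a0 ha0S ha0n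
    have ha00 : a0 = 0 := by omega
    rw [ha00, hw0] at hwa0'
    exact hw0i hwa0'
  have hsub2 : ({0, astar} : Finset ℕ) ⊆ S6.starts n w \ T := by
    intro x hx
    rw [Finset.mem_insert, Finset.mem_singleton] at hx
    rw [Finset.mem_sdiff]
    rcases hx with rfl | rfl
    · refine ⟨(S6.mem_starts n w).mpr ⟨by omega, Or.inl rfl⟩, ?_⟩
      rw [hT, Finset.mem_filter]
      push_neg
      intro _
      simpa using hw0
    · refine ⟨hsS, ?_⟩
      rw [hT, Finset.mem_filter]
      push_neg
      intro _
      simpa using hwa0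
  have hcard2 : 2 ≤ (S6.starts n w \ T).card := by
    have h := Finset.card_le_card hsub2
    rwa [Finset.card_pair (Ne.symm hastar0)] at h
  have hcards : (S6.starts n w \ T).card = (S6.starts n w).card - T.card :=
    Finset.card_sdiff_of_subset hTsub
  have hTle : T.card ≤ (S6.starts n w).card := Finset.card_le_card hTsub
  have hbound : T.card ≤ numFlat n w - 2 := by rw [hnum]; omega
  have hlen : E.length = T.card := by rw [hE, List.length_map, Finset.length_toList]
  have hcost : seqCost anyCost u E = (T.card : ℕ∞) := by
    rw [S6.seqCost_any_length u E hvalid, hlen]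
  have hle : seqCost anyCost u E ≤ ((numFlat n w - 2 : ℕ) : ℕ∞) := by
    rw [hcost]
    exact_mod_cast hbound
  refine ⟨⟨E, hvalid, happly, hle⟩, ?_⟩
  exact le_trans (sInf_le ⟨E, hvalid, happly, rfl⟩) hle
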